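/- For β > 0, the integral ∫₀^β ds/√(β² − s²) equals π/2, and consequently lim_{β→0⁺} ∫₀^β e^{−sν}/√(2cosh β − 2cosh s) ds = π/2 for any fixed real ν ≥ 0. -/

import Mathlib

open Real Filter MeasureTheory Set intervalIntegral

private lemma aux_sinh_le_mul_cosh {x : ℝ} (hx : 0 ≤ x) :
    Real.sinh x ≤ x * Real.cosh x := by
  have hmono : MonotoneOn (fun x : ℝ => x * Real.cosh x - Real.sinh x) (Set.Ici 0) := by
    apply monotoneOn_of_deriv_nonneg (convex_Ici 0)
    · fun_prop
    · intro x _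
      exact (((hasDerivAt_id' x).mul (Real.hasDerivAt_cosh x)).sub
        (Real.hasDerivAt_sinh x)).differentiableAt.differentiableWithinAt
    · intro x hx
      rw [interior_Ici] at hx
      have hd := (((hasDerivAt_id' x).mul (Real.hasDerivAt_cosh x)).sub
        (Real.hasDerivAt_sinh x)).deriv
      rw [show deriv (fun x : ℝ => x * Real.cosh x - Real.sinh x) x =
        1 * Real.cosh x + x * Real.sinh x - Real.cosh x from hd]
      have hs : 0 < Real.sinh x := Real.sinh_pos_iff.mpr hx
      nlinarith [mul_pos hx hs]
  have h0 := hmono (by simp : (0:ℝ) ∈ Set.Ici 0) (by exact hx) hx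
  simp only [Real.cosh_zero, Real.sinh_zero, zero_mul, sub_zero] at h0
  linarith

private lemma aux_self_le_sinh {x : ℝ} (hx : 0 ≤ x) : x ≤ Real.sinh x := by
  rcases hx.eq_or_lt with h | h
  · simp [← h]
  · exact (Real.self_lt_sinh_iff.mpr h).le

private lemma aux_two_cosh_sub (x y : ℝ) :
    2 * Real.cosh x - 2 * Real.cosh y =
      4 * (Real.sinh ((x + y) / 2) * Real.sinh ((x - y) / 2)) := by
  have h1 := Real.cosh_add ((x + y) / 2) ((x - y) / 2)
  have h2 := Real.cosh_sub ((x + y) / 2) ((x - y) / 2)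
  have e1 : (x + y) / 2 + (x - y) / 2 = x := by ring
  have e2 : (x + y) / 2 - (x - y) / 2 = y := by ring
  rw [e1] at h1
  rw [e2] at h2
  nlinarith [h1, h2]

private lemma aux_key_bounds {β s : ℝ} (h0 : 0 ≤ s) (h1 : s ≤ β) :
    β ^ 2 - s ^ 2 ≤ 2 * Real.cosh β - 2 * Real.cosh s ∧
      2 * Real.cosh β - 2 * Real.cosh s ≤ Real.cosh β ^ 2 * (β ^ 2 - s ^ 2) := by
  set u := (β + s) / 2 with hu_def
  set v := (β - s) / 2 with hv_def
  have hu : 0 ≤ u := by rw [hu_def]; linarith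
  have hv : 0 ≤ v := by rw [hv_def]; linarith
  have hβ0 : 0 ≤ β := le_trans h0 h1
  have hsu := aux_self_le_sinh hu
  have hsv := aux_self_le_sinh hv
  have hcu := aux_sinh_le_mul_cosh hu
  have hcv := aux_sinh_le_mul_cosh hv
  have hub : Real.cosh u ≤ Real.cosh β := by
    rw [Real.cosh_le_cosh, abs_of_nonneg hu, abs_of_nonneg hβ0, hu_def]; linarith
  have hvb : Real.cosh v ≤ Real.cosh β := by
    rw [Real.cosh_le_cosh, abs_of_nonneg hv, abs_of_nonneg hβ0, hv_def]; linarith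
  have huv : 4 * (u * v) = β ^ 2 - s ^ 2 := by rw [hu_def, hv_def]; ring
  rw [aux_two_cosh_sub]
  constructor
  · have hm : u * v ≤ Real.sinh u * Real.sinh v :=
      mul_le_mul hsu hsv hv (hu.trans hsu)
    linarith
  · have s1 : Real.sinh u ≤ u * Real.cosh β :=
      hcu.trans (mul_le_mul_of_nonneg_left hub hu)
    have s2 : Real.sinh v ≤ v * Real.cosh β :=
      hcv.trans (mul_le_mul_of_nonneg_left hvb hv)
    have hm : Real.sinh u * Real.sinh v ≤ (u * Real.cosh β) * (v * Real.cosh β) :=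
      mul_le_mul s1 s2 (hv.trans hsv) (mul_nonneg hu (Real.cosh_pos β).le)
    nlinarith [hm, huv]

private lemma aux_g_integrable {β : ℝ} (hβ : 0 < β) :
    IntervalIntegrable (fun s : ℝ => 1 / Real.sqrt (β ^ 2 - s ^ 2)) volume 0 β := by
  have h1 : IntervalIntegrable (fun x : ℝ => x ^ (-2⁻¹ : ℝ)) volume 0 β :=
    intervalIntegral.intervalIntegrable_rpow' (by norm_num)
  have h2 : IntervalIntegrable (fun x : ℝ => (β - x) ^ (-2⁻¹ : ℝ)) volume 0 β := by
    simpa using (h1.comp_sub_left β).symm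
  have hmaj := h2.const_mul (Real.sqrt β)⁻¹
  apply hmaj.mono_fun
  · apply Measurable.aestronglyMeasurable
    exact measurable_const.div
      (Real.continuous_sqrt.measurable.comp
        (measurable_const.sub (measurable_id.pow_const 2)))
  · rw [Set.uIoc_of_le hβ.le]
    refine (ae_restrict_iff' measurableSet_Ioc).mpr (Filter.Eventually.of_forall fun s hs => ?_)
    have hs0 : 0 ≤ s := hs.1.le
    have hsβ : s ≤ β := hs.2
    have hrw : (β - s) ^ (-2⁻¹ : ℝ) = (Real.sqrt (β - s))⁻¹ := by
      rw [Real.rpow_neg (by linarith), Real.sqrt_eq_rpow]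
      norm_num
    simp only [Real.norm_eq_abs]
    rw [abs_of_nonneg (by positivity),
      abs_of_nonneg (mul_nonneg (inv_nonneg.mpr (Real.sqrt_nonneg β))
        (Real.rpow_nonneg (by linarith) _)), hrw, one_div,
      ← mul_inv, ← Real.sqrt_mul hβ.le]
    rcases hsβ.lt_or_eq with h | h
    · apply inv_anti₀
      · apply Real.sqrt_pos.mpr; nlinarith
      · apply Real.sqrt_le_sqrt; nlinarith
    · subst h
      simp

private lemma aux_arcsine_integral {β : ℝ} (hβ : 0 < β) :
    ∫ s in (0:ℝ)..β, 1 / Real.sqrt (β ^ 2 - s ^ 2) = π / 2 := by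
  have hval := intervalIntegral.integral_eq_sub_of_hasDeriv_right_of_le hβ.le
    (f := fun s : ℝ => Real.arcsin (s / β))
    (f' := fun s : ℝ => 1 / Real.sqrt (β ^ 2 - s ^ 2))
    (Real.continuous_arcsin.comp (continuous_id.div_const β)).continuousOn
    (fun x hx => by
      have hx1 : x / β < 1 := (div_lt_one hβ).mpr hx.2
      have hx2 : (-1 : ℝ) < x / β := by
        have : (0:ℝ) ≤ x / β := div_nonneg hx.1.le hβ.le
        linarith
      have hd := (Real.hasDerivAt_arcsin hx2.ne' hx1.ne).comp x
        ((hasDerivAt_id x).div_const β)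
      have heq : 1 / Real.sqrt (β ^ 2 - x ^ 2) =
          1 / Real.sqrt (1 - (x / β) ^ 2) * (1 / β) := by
        have hfs : β ^ 2 - x ^ 2 = β ^ 2 * (1 - (x / β) ^ 2) := by
          field_simp
        rw [hfs, Real.sqrt_mul (sq_nonneg β), Real.sqrt_sq hβ.le]
        rw [one_div, one_div, one_div, mul_inv]
        ring
      show HasDerivWithinAt (fun s : ℝ => Real.arcsin (s / β))
        (1 / Real.sqrt (β ^ 2 - x ^ 2)) (Set.Ioi x) x
      rw [heq]
      exact hd.hasDerivWithinAt)
    (aux_g_integrable hβ)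
  rw [hval]
  norm_num [div_self hβ.ne', Real.arcsin_one]

theorem arcsine_integral_and_diffractive_limit (ν : ℝ) (hν : 0 ≤ ν) :
    (∀ β : ℝ, 0 < β → ∫ s in (0:ℝ)..β, 1 / Real.sqrt (β ^ 2 - s ^ 2) = π / 2) ∧
    Filter.Tendsto
      (fun β : ℝ => ∫ s in (0:ℝ)..β,
        Real.exp (-(s * ν)) / Real.sqrt (2 * Real.cosh β - 2 * Real.cosh s))
      (nhdsWithin 0 (Set.Ioi 0)) (nhds (π / 2)) := by
  refine ⟨fun β hβ => aux_arcsine_integral hβ, ?_⟩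
  set I : ℝ → ℝ := fun β => ∫ s in (0:ℝ)..β,
    Real.exp (-(s * ν)) / Real.sqrt (2 * Real.cosh β - 2 * Real.cosh s) with hI_def
  set L : ℝ → ℝ := fun β => Real.exp (-(β * ν)) / Real.cosh β * (π / 2) with hL_def
  have hLtendsto : Tendsto L (nhdsWithin 0 (Set.Ioi 0)) (nhds (π / 2)) := by
    have hc : ContinuousAt L 0 := by
      apply ContinuousAt.mul _ continuousAt_const
      exact ContinuousAt.div (by fun_prop) (by fun_prop) (Real.cosh_pos 0).ne'
    have h0 : L 0 = π / 2 := by simp [hL_def]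
    simpa [h0] using hc.tendsto.mono_left nhdsWithin_le_nhds
  apply tendsto_of_tendsto_of_tendsto_of_le_of_le' hLtendsto tendsto_const_nhds
  · -- lower bound
    filter_upwards [self_mem_nhdsWithin] with β (hβ : 0 < β)
    have hgInt := aux_g_integrable hβ
    -- pointwise upper bound (used for integrability too)
    have hub : ∀ s ∈ Set.Icc (0:ℝ) β,
        Real.exp (-(s * ν)) / Real.sqrt (2 * Real.cosh β - 2 * Real.cosh s) ≤
          1 / Real.sqrt (β ^ 2 - s ^ 2) := by
      intro s hs
      obtain ⟨k1, _⟩ := aux_key_bounds hs.1 hs.2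
      rcases hs.2.lt_or_eq with h | h
      · have hA : 0 < β ^ 2 - s ^ 2 := by nlinarith [hs.1]
        exact div_le_div₀ zero_le_one
          (Real.exp_le_one_iff.mpr (by nlinarith [mul_nonneg hs.1 hν]))
          (Real.sqrt_pos.mpr hA) (Real.sqrt_le_sqrt k1)
      · subst h; simp
    have hfm : AEStronglyMeasurable
        (fun s : ℝ => Real.exp (-(s * ν)) / Real.sqrt (2 * Real.cosh β - 2 * Real.cosh s))
        (volume.restrict (Set.uIoc (0:ℝ) β)) := by
      apply Measurable.aestronglyMeasurable
      exact (Real.measurable_exp.comp (measurable_id.mul_const ν).neg).div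
        (Real.continuous_sqrt.measurable.comp
          (measurable_const.sub (Real.continuous_cosh.measurable.const_mul 2)))
    have hfInt : IntervalIntegrable
        (fun s : ℝ => Real.exp (-(s * ν)) / Real.sqrt (2 * Real.cosh β - 2 * Real.cosh s))
        volume 0 β := by
      apply hgInt.mono_fun' hfm
      rw [Set.uIoc_of_le hβ.le]
      refine (ae_restrict_iff' measurableSet_Ioc).mpr (Filter.Eventually.of_forall fun s hs => ?_)
      simp only [Real.norm_eq_abs]
      rw [abs_of_nonneg (by positivity)]
      exact hub s ⟨hs.1.le, hs.2⟩
    have hlb : ∀ s ∈ Set.Icc (0:ℝ) β,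
        Real.exp (-(β * ν)) / Real.cosh β * (1 / Real.sqrt (β ^ 2 - s ^ 2)) ≤
          Real.exp (-(s * ν)) / Real.sqrt (2 * Real.cosh β - 2 * Real.cosh s) := by
      intro s hs
      obtain ⟨k1, k2⟩ := aux_key_bounds hs.1 hs.2
      rcases hs.2.lt_or_eq with h | h
      · have hA : 0 < β ^ 2 - s ^ 2 := by nlinarith [hs.1]
        have hDpos : 0 < Real.sqrt (2 * Real.cosh β - 2 * Real.cosh s) :=
          Real.sqrt_pos.mpr (lt_of_lt_of_le hA k1)
        have hDle : Real.sqrt (2 * Real.cosh β - 2 * Real.cosh s) ≤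
            Real.cosh β * Real.sqrt (β ^ 2 - s ^ 2) := by
          have := Real.sqrt_le_sqrt k2
          rwa [Real.sqrt_mul (sq_nonneg _), Real.sqrt_sq (Real.cosh_pos β).le] at this
        rw [div_mul_div_comm, mul_one]
        exact div_le_div₀ (Real.exp_pos _).le
          (Real.exp_le_exp.mpr (by nlinarith [mul_le_mul_of_nonneg_right hs.2 hν]))
          hDpos hDle
      · subst h; simp
    calc L β = ∫ s in (0:ℝ)..β,
          Real.exp (-(β * ν)) / Real.cosh β * (1 / Real.sqrt (β ^ 2 - s ^ 2)) := by
            rw [intervalIntegral.integral_const_mul, aux_arcsine_integral hβ]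
      _ ≤ I β := intervalIntegral.integral_mono_on hβ.le
          (hgInt.const_mul _) hfInt hlb
  · -- upper bound
    filter_upwards [self_mem_nhdsWithin] with β (hβ : 0 < β)
    have hgInt := aux_g_integrable hβ
    have hub : ∀ s ∈ Set.Icc (0:ℝ) β,
        Real.exp (-(s * ν)) / Real.sqrt (2 * Real.cosh β - 2 * Real.cosh s) ≤
          1 / Real.sqrt (β ^ 2 - s ^ 2) := by
      intro s hs
      obtain ⟨k1, _⟩ := aux_key_bounds hs.1 hs.2
      rcases hs.2.lt_or_eq with h | h
      · have hA : 0 < β ^ 2 - s ^ 2 := by nlinarith [hs.1]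
        exact div_le_div₀ zero_le_one
          (Real.exp_le_one_iff.mpr (by nlinarith [mul_nonneg hs.1 hν]))
          (Real.sqrt_pos.mpr hA) (Real.sqrt_le_sqrt k1)
      · subst h; simp
    have hfm : AEStronglyMeasurable
        (fun s : ℝ => Real.exp (-(s * ν)) / Real.sqrt (2 * Real.cosh β - 2 * Real.cosh s))
        (volume.restrict (Set.uIoc (0:ℝ) β)) := by
      apply Measurable.aestronglyMeasurable
      exact (Real.measurable_exp.comp (measurable_id.mul_const ν).neg).div
        (Real.continuous_sqrt.measurable.comp
          (measurable_const.sub (Real.continuous_cosh.measurable.const_mul 2)))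
    have hfInt : IntervalIntegrable
        (fun s : ℝ => Real.exp (-(s * ν)) / Real.sqrt (2 * Real.cosh β - 2 * Real.cosh s))
        volume 0 β := by
      apply hgInt.mono_fun' hfm
      rw [Set.uIoc_of_le hβ.le]
      refine (ae_restrict_iff' measurableSet_Ioc).mpr (Filter.Eventually.of_forall fun s hs => ?_)
      simp only [Real.norm_eq_abs]
      rw [abs_of_nonneg (by positivity)]
      exact hub s ⟨hs.1.le, hs.2⟩
    calc I β ≤ ∫ s in (0:ℝ)..β, 1 / Real.sqrt (β ^ 2 - s ^ 2) :=
          intervalIntegral.integral_mono_on hβ.le hfInt hgInt hub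
      _ = π / 2 := aux_arcsine_integral hβ
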